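/- Let p ≥ 2 be an integer, I ⊆ {0,1,...,p−1}, and n ≥ 1. The n-fold iterate g_{p,I}^n has exactly p^n fixed points in [0,1], and if x_0 < x_1 < ... < x_{p^n−1} denote these fixed points in increasing order, then for 0 ≤ k < p^n one has x_k = k/(p^n − 1) if k ∈ I_{p^n}, and x_k = (k+1)/(p^n + 1) otherwise. -/

import Mathlib

/-- The (not necessarily continuous) piecewise linear map `g_{p,I} : [0,1] → [0,1]`:
on `[k/p, (k+1)/p)` it is `x ↦ p·x − k` if `k ∈ I` and `x ↦ k + 1 − p·x` if `k ∉ I`,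
with `g_{p,I}(1) = 1` if `p − 1 ∈ I` and `g_{p,I}(1) = 0` otherwise. -/
noncomputable def gpI (p : ℕ) (I : Finset ℕ) (x : ℝ) : ℝ :=
  if x = 1 then (if p - 1 ∈ I then 1 else 0)
  else if (⌊(p : ℝ) * x⌋).toNat ∈ I then (p : ℝ) * x - (⌊(p : ℝ) * x⌋).toNat
  else ((⌊(p : ℝ) * x⌋).toNat : ℝ) + 1 - (p : ℝ) * x

/-- `I_{p^n}` is the set of indices `k < p^n` such that the `n`-fold iterate of `g_{p,I}`
is increasing on `(k/p^n, (k+1)/p^n)`, where it is given by `x ↦ p^n·x − k`. -/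
def ISet (p : ℕ) (I : Finset ℕ) (n : ℕ) : Set ℕ :=
  {k | k < p ^ n ∧ ∀ x ∈ Set.Ioo ((k : ℝ) / (p : ℝ) ^ n) (((k : ℝ) + 1) / (p : ℝ) ^ n),
    (gpI p I)^[n] x = (p : ℝ) ^ n * x - (k : ℝ)}


def typ (p : ℕ) (I : Finset ℕ) : ℕ → ℕ → Bool
  | 0, _ => true
  | (n+1), k => if k / p ^ n ∈ I then typ p I n (k % p ^ n)
      else ! typ p I n (p ^ n - 1 - k % p ^ n)

lemma gpI_zero (p : ℕ) (I : Finset ℕ) : gpI p I 0 = if 0 ∈ I then 0 else 1 := by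
  simp [gpI]

lemma gpI_one (p : ℕ) (I : Finset ℕ) : gpI p I 1 = if p - 1 ∈ I then 1 else 0 := by
  simp [gpI]

lemma gpI_eval (p : ℕ) (I : Finset ℕ) {x : ℝ} {j : ℕ} (hj : (j:ℝ) ≤ (p:ℝ) * x)
    (hj' : (p:ℝ) * x < (j:ℝ) + 1) (hx1 : x ≠ 1) :
    gpI p I x = if j ∈ I then (p:ℝ) * x - j else (j:ℝ) + 1 - (p:ℝ) * x := by
  have hfl : ⌊(p:ℝ) * x⌋ = (j : ℤ) := by
    rw [Int.floor_eq_iff]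
    constructor
    · exact_mod_cast hj
    · exact_mod_cast hj'
  simp [gpI, hx1, hfl]

set_option maxHeartbeats 1200000 in
lemma key (p : ℕ) (I : Finset ℕ) (hp : 2 ≤ p) (n : ℕ) :
    (∀ k < p ^ n, ∀ x ∈ Set.Ioo ((k:ℝ) / (p:ℝ) ^ n) (((k:ℝ)+1) / (p:ℝ) ^ n),
      (gpI p I)^[n] x = if typ p I n k then (p:ℝ) ^ n * x - k else ((k:ℝ)+1) - (p:ℝ)^n * x)
    ∧ ((gpI p I)^[n] 0 = if typ p I n 0 then 0 else 1)
    ∧ ((gpI p I)^[n] 1 = if typ p I n (p ^ n - 1) then 1 else 0) := by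
  have hp0 : (0:ℝ) < p := by positivity
  induction n with
  | zero =>
    refine ⟨?_, by simp [typ], by simp [typ]⟩
    intro k hk x _
    rw [pow_zero] at hk
    have : k = 0 := by omega
    subst this
    simp [typ]
  | succ n ih =>
    obtain ⟨ih1, ih2, ih3⟩ := ih
    have hqpos : (0:ℝ) < (p:ℝ) ^ n := by positivity
    have hq1 : (1:ℕ) ≤ p ^ n := Nat.one_le_pow _ _ (by omega)
    refine ⟨?_, ?_, ?_⟩
    · intro k hk x hx
      obtain ⟨hx1, hx2⟩ := hx
      set j := k / p ^ n with hj
      set r := k % p ^ n with hr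
      have hrq : r < p ^ n := Nat.mod_lt _ (by omega)
      have hkjr : p ^ n * j + r = k := Nat.div_add_mod k (p ^ n)
      clear_value j r
      have hkjrR : ((p:ℝ) ^ n) * j + r = k := by exact_mod_cast hkjr
      have hrqR : (r:ℝ) + 1 ≤ (p:ℝ) ^ n := by exact_mod_cast hrq
      have hxlt1 : x < 1 := by
        apply lt_of_lt_of_le hx2
        rw [div_le_one (by positivity)]
        have : (k:ℝ) + 1 ≤ (p:ℝ) ^ (n+1) := by exact_mod_cast hk
        linarith
      have hpowR : (p:ℝ) ^ (n+1) = (p:ℝ) * (p:ℝ)^n := by ring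
      have hk1 : (k:ℝ) < x * ((p:ℝ) * (p:ℝ)^n) := by
        rw [div_lt_iff₀ (by positivity), hpowR] at hx1; exact hx1
      have hk2 : x * ((p:ℝ) * (p:ℝ)^n) < (k:ℝ) + 1 := by
        rw [lt_div_iff₀ (by positivity), hpowR] at hx2; exact hx2
      have hr0 : (0:ℝ) ≤ r := Nat.cast_nonneg r
      have hb1 : (j:ℝ) ≤ (p:ℝ) * x := by
        rw [← mul_le_mul_iff_of_pos_right hqpos]; nlinarith
      have hb2 : (p:ℝ) * x < (j:ℝ) + 1 := by
        rw [← mul_lt_mul_iff_of_pos_right hqpos]; nlinarith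
      rw [Function.iterate_succ_apply, gpI_eval p I hb1 hb2 (ne_of_lt hxlt1)]
      by_cases hjI : j ∈ I
      · rw [if_pos hjI]
        have hy : (p:ℝ) * x - j ∈ Set.Ioo ((r:ℝ) / (p:ℝ)^n) (((r:ℝ)+1) / (p:ℝ)^n) := by
          constructor
          · rw [div_lt_iff₀ (by positivity)]; nlinarith
          · rw [lt_div_iff₀ (by positivity)]; nlinarith
        rw [ih1 r hrq _ hy]
        have ht : typ p I (n+1) k = typ p I n r := by
          simp only [typ]
          rw [← hj, ← hr, if_pos hjI]
        rw [ht]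
        rw [hpowR]
        rcases htyp : typ p I n r with _ | _ <;>
          simp only [htyp, Bool.false_eq_true, if_true, if_false] <;> linarith
      · rw [if_neg hjI]
        set r' := p ^ n - 1 - r with hr'
        have hrr' : r' + r + 1 = p ^ n := by omega
        clear_value r'
        have hrr'R : (r':ℝ) + r + 1 = (p:ℝ)^n := by exact_mod_cast hrr'
        have hy : (j:ℝ) + 1 - (p:ℝ) * x ∈ Set.Ioo ((r':ℝ) / (p:ℝ)^n) (((r':ℝ)+1) / (p:ℝ)^n) := by
          constructor
          · rw [div_lt_iff₀ (by positivity)]; nlinarith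
          · rw [lt_div_iff₀ (by positivity)]; nlinarith
        rw [ih1 r' (by omega) _ hy]
        have ht : typ p I (n+1) k = ! typ p I n r' := by
          simp only [typ]
          rw [← hj, ← hr, if_neg hjI, ← hr']
        rw [ht]
        rw [hpowR]
        rcases htyp : typ p I n r' with _ | _ <;>
          simp only [htyp, Bool.not_true, Bool.not_false, Bool.false_eq_true, if_true, if_false] <;>
          linarith
    · rw [Function.iterate_succ_apply, gpI_zero]
      by_cases h0I : 0 ∈ I
      · rw [if_pos h0I, ih2]
        have ht : typ p I (n+1) 0 = typ p I n 0 := by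
          simp only [typ, Nat.zero_div, Nat.zero_mod, if_pos h0I]
        rw [ht]
      · rw [if_neg h0I, ih3]
        have ht : typ p I (n+1) 0 = ! typ p I n (p ^ n - 1) := by
          simp only [typ, Nat.zero_div, Nat.zero_mod, if_neg h0I, Nat.sub_zero]
        rw [ht]
        rcases typ p I n (p ^ n - 1) with _ | _ <;> simp
    · rw [Function.iterate_succ_apply, gpI_one]
      have hpsub : p - 1 + 1 = p := by omega
      have e3 : (p - 1 + 1) * p ^ n = p ^ (n+1) := by rw [hpsub, pow_succ, mul_comm]
      have e2 : (p - 1) * p ^ n + p ^ n = (p - 1 + 1) * p ^ n := by ring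
      have hdiv : (p ^ (n+1) - 1) / p ^ n = p - 1 :=
        Nat.div_eq_of_lt_le (by omega) (by omega)
      have hmod : (p ^ (n+1) - 1) % p ^ n = p ^ n - 1 := by
        have h5 := Nat.div_add_mod (p ^ (n+1) - 1) (p ^ n)
        rw [hdiv] at h5
        have e4 : p ^ n * (p - 1) = (p - 1) * p ^ n := mul_comm _ _
        omega
      by_cases hI1 : p - 1 ∈ I
      · rw [if_pos hI1, ih3]
        have ht : typ p I (n+1) (p ^ (n+1) - 1) = typ p I n (p ^ n - 1) := by
          simp only [typ, hdiv, hmod, if_pos hI1]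
        rw [ht]
      · rw [if_neg hI1, ih2]
        have ht : typ p I (n+1) (p ^ (n+1) - 1) = ! typ p I n 0 := by
          simp only [typ, hdiv, hmod, if_neg hI1, Nat.sub_self]
        rw [ht]
        rcases typ p I n 0 with _ | _ <;> simp

set_option maxHeartbeats 800000 in
lemma grid (p : ℕ) (I : Finset ℕ) (hp : 2 ≤ p) (n : ℕ) :
    ∀ m ≤ p ^ n, (gpI p I)^[n] ((m:ℝ)/(p:ℝ)^n) = 0 ∨ (gpI p I)^[n] ((m:ℝ)/(p:ℝ)^n) = 1 := by
  have hp0 : (0:ℝ) < p := by positivity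
  induction n with
  | zero =>
    intro m hm
    rw [pow_zero] at hm
    interval_cases m <;> simp
  | succ n ih =>
    have hqpos : (0:ℝ) < (p:ℝ) ^ n := by positivity
    have hq1 : (1:ℕ) ≤ p ^ n := Nat.one_le_pow _ _ (by omega)
    intro m hm
    by_cases hm1 : m = p ^ (n+1)
    · subst hm1
      have hx : ((p ^ (n+1) : ℕ):ℝ)/(p:ℝ)^(n+1) = 1 := by
        push_cast
        field_simp
      rw [hx]
      rcases (key p I hp (n+1)).2.2 with h
      rw [h]
      rcases typ p I (n+1) (p ^ (n+1) - 1) with _ | _ <;> simp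
    · have hmlt : m < p ^ (n+1) := by omega
      set j := m / p ^ n with hj
      set r := m % p ^ n with hr
      have hrq : r < p ^ n := Nat.mod_lt _ (by omega)
      have hkjr : p ^ n * j + r = m := Nat.div_add_mod m (p ^ n)
      clear_value j r
      have hkjrR : ((p:ℝ) ^ n) * j + r = m := by exact_mod_cast hkjr
      have hrqR : (r:ℝ) + 1 ≤ (p:ℝ) ^ n := by exact_mod_cast hrq
      have hpowR : (p:ℝ) ^ (n+1) = (p:ℝ) * (p:ℝ)^n := by ring
      set x : ℝ := (m:ℝ)/(p:ℝ)^(n+1) with hxdef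
      have hpx : (p:ℝ) * x = (m:ℝ)/(p:ℝ)^n := by
        rw [hxdef, hpowR]; field_simp
      have hx1 : x < 1 := by
        rw [hxdef, div_lt_one (by positivity)]
        exact_mod_cast hmlt
      have hb1 : (j:ℝ) ≤ (p:ℝ) * x := by
        rw [hpx, le_div_iff₀ hqpos]
        linarith [Nat.cast_nonneg (α := ℝ) r]
      have hb2 : (p:ℝ) * x < (j:ℝ) + 1 := by
        rw [hpx, div_lt_iff₀ hqpos]
        have : ((j:ℝ)+1) * (p:ℝ)^n = (p:ℝ)^n * j + (p:ℝ)^n := by ring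
        linarith
      rw [Function.iterate_succ_apply, gpI_eval p I hb1 hb2 (ne_of_lt hx1)]
      by_cases hjI : j ∈ I
      · rw [if_pos hjI]
        have he : (p:ℝ) * x - j = (r:ℝ)/(p:ℝ)^n := by
          rw [hpx, eq_div_iff (ne_of_gt hqpos), sub_mul, div_mul_cancel₀ _ (ne_of_gt hqpos)]
          linarith
        rw [he]
        exact ih r (by omega)
      · rw [if_neg hjI]
        have he : (j:ℝ) + 1 - (p:ℝ) * x = ((p ^ n - r : ℕ):ℝ)/(p:ℝ)^n := by
          have hc : ((p ^ n - r : ℕ):ℝ) = (p:ℝ)^n - r := by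
            push_cast [Nat.cast_sub (le_of_lt hrq)]
            ring
          rw [hpx, hc, eq_div_iff (ne_of_gt hqpos), sub_mul, add_mul,
            div_mul_cancel₀ _ (ne_of_gt hqpos)]
          linarith
        rw [he]
        exact ih (p ^ n - r) (by omega)

lemma ISet_iff (p : ℕ) (I : Finset ℕ) (hp : 2 ≤ p) (n : ℕ) {k : ℕ} (hk : k < p ^ n) :
    k ∈ ISet p I n ↔ typ p I n k = true := by
  have hqpos : (0:ℝ) < (p:ℝ) ^ n := by positivity
  constructor
  · intro hmem
    by_contra htyp
    have hx : ((k:ℝ) + 1/4)/(p:ℝ)^n ∈ Set.Ioo ((k:ℝ)/(p:ℝ)^n) (((k:ℝ)+1)/(p:ℝ)^n) := by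
      constructor
      · rw [div_lt_div_iff₀ hqpos hqpos]; nlinarith
      · rw [div_lt_div_iff₀ hqpos hqpos]; nlinarith
    have h1 := hmem.2 _ hx
    have h2 := (key p I hp n).1 k hk _ hx
    rw [if_neg htyp, h1] at h2
    have hPx : (p:ℝ)^n * (((k:ℝ) + 1/4)/(p:ℝ)^n) = (k:ℝ) + 1/4 := by
      field_simp
    rw [hPx] at h2
    linarith
  · intro htyp
    refine ⟨hk, fun x hx => ?_⟩
    rw [(key p I hp n).1 k hk x hx, if_pos htyp]

noncomputable def xfun (p : ℕ) (I : Finset ℕ) (n k : ℕ) : ℝ :=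
  if k < p ^ n then
    (if typ p I n k then (k:ℝ)/((p:ℝ)^n - 1) else ((k:ℝ)+1)/((p:ℝ)^n+1))
  else k

lemma xfun_mem_Icc (p : ℕ) (I : Finset ℕ) (hp : 2 ≤ p) {n : ℕ} (hn : 1 ≤ n)
    {k : ℕ} (hk : k < p ^ n) : xfun p I n k ∈ Set.Icc (0:ℝ) 1 := by
  have hP : (2:ℝ) ≤ (p:ℝ)^n := by
    calc (2:ℝ) ≤ (p:ℝ) := by exact_mod_cast hp
    _ = (p:ℝ)^1 := (pow_one _).symm
    _ ≤ (p:ℝ)^n := pow_le_pow_right₀ (by exact_mod_cast (by omega : 1 ≤ p)) hn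
  have hkR : (k:ℝ) + 1 ≤ (p:ℝ)^n := by exact_mod_cast hk
  have hk0 : (0:ℝ) ≤ k := Nat.cast_nonneg k
  rw [xfun, if_pos hk]
  rcases typ p I n k with _ | _ <;> simp only [if_true, if_false, Bool.false_eq_true]
  · constructor
    · positivity
    · rw [div_le_one (by linarith)]; linarith
  · constructor
    · exact div_nonneg hk0 (by linarith)
    · rw [div_le_one (by linarith)]; linarith

lemma xfun_strictMono (p : ℕ) (I : Finset ℕ) (hp : 2 ≤ p) {n : ℕ} (hn : 1 ≤ n) :
    StrictMono (xfun p I n) := by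
  have hP : (2:ℝ) ≤ (p:ℝ)^n := by
    calc (2:ℝ) ≤ (p:ℝ) := by exact_mod_cast hp
    _ = (p:ℝ)^1 := (pow_one _).symm
    _ ≤ (p:ℝ)^n := pow_le_pow_right₀ (by exact_mod_cast (by omega : 1 ≤ p)) hn
  apply strictMono_nat_of_lt_succ
  intro k
  by_cases hk1 : k + 1 < p ^ n
  · have hk : k < p ^ n := by omega
    have hk1R : (k:ℝ) + 1 + 1 ≤ (p:ℝ)^n := by exact_mod_cast hk1
    have hk0 : (0:ℝ) ≤ k := Nat.cast_nonneg k
    rw [xfun, xfun, if_pos hk, if_pos hk1]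
    push_cast
    rcases typ p I n k with _ | _ <;> rcases typ p I n (k+1) with _ | _ <;>
      simp only [if_true, if_false, Bool.false_eq_true] <;>
      rw [div_lt_div_iff₀ (by linarith) (by linarith)] <;> nlinarith
  · by_cases hk : k < p ^ n
    · have hke : k + 1 = p ^ n := by omega
      have h1 : xfun p I n k ≤ 1 := (xfun_mem_Icc p I hp hn hk).2
      have h2 : xfun p I n (k+1) = ((k:ℝ)+1) := by
        rw [xfun, if_neg (by omega)]; push_cast; ring
      rw [h2]
      have : (2:ℝ) ≤ (k:ℝ) + 1 := by
        have : ((p:ℕ):ℝ)^n = ((k:ℕ):ℝ) + 1 := by exact_mod_cast hke.symm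
        linarith
      linarith
    · rw [xfun, xfun, if_neg hk, if_neg (by omega)]
      exact_mod_cast Nat.lt_succ_self k

lemma pow_twoR (p : ℕ) (hp : 2 ≤ p) {n : ℕ} (hn : 1 ≤ n) : (2:ℝ) ≤ (p:ℝ)^n := by
  calc (2:ℝ) ≤ (p:ℝ) := by exact_mod_cast hp
  _ = (p:ℝ)^1 := (pow_one _).symm
  _ ≤ (p:ℝ)^n := pow_le_pow_right₀ (by exact_mod_cast (by omega : 1 ≤ p)) hn

set_option maxHeartbeats 800000 in
lemma xfun_fixed (p : ℕ) (I : Finset ℕ) (hp : 2 ≤ p) {n : ℕ} (hn : 1 ≤ n)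
    {k : ℕ} (hk : k < p ^ n) : (gpI p I)^[n] (xfun p I n k) = xfun p I n k := by
  have hPR : (2:ℝ) ≤ (p:ℝ)^n := pow_twoR p hp hn
  have hne1 : (p:ℝ)^n - 1 ≠ 0 := by linarith
  have hne2 : (p:ℝ)^n + 1 ≠ 0 := by linarith
  have hk0R : (0:ℝ) ≤ k := Nat.cast_nonneg k
  have hkR : (k:ℝ) + 1 ≤ (p:ℝ)^n := by exact_mod_cast hk
  rw [xfun, if_pos hk]
  by_cases htyp : typ p I n k = true
  · rw [if_pos htyp]
    by_cases hk0 : k = 0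
    · subst hk0
      rw [show ((0:ℕ):ℝ)/((p:ℝ)^n - 1) = 0 by simp]
      rw [(key p I hp n).2.1, if_pos htyp]
    · by_cases hklast : k = p ^ n - 1
      · have hc : (k:ℝ) = (p:ℝ)^n - 1 := by
          have : (k:ℝ) + 1 = (p:ℝ)^n := by exact_mod_cast (by omega : k + 1 = p ^ n)
          linarith
        rw [hc, div_self hne1]
        rw [(key p I hp n).2.2, if_pos (by rw [← hklast]; exact htyp)]
      · have hk1R : (1:ℝ) ≤ (k:ℝ) := by exact_mod_cast (by omega : 1 ≤ k)
        have hk2R : (k:ℝ) + 2 ≤ (p:ℝ)^n := by exact_mod_cast (by omega : k + 2 ≤ p ^ n)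
        have hx : (k:ℝ)/((p:ℝ)^n - 1) ∈ Set.Ioo ((k:ℝ)/(p:ℝ)^n) (((k:ℝ)+1)/(p:ℝ)^n) := by
          constructor
          · rw [div_lt_div_iff₀ (by linarith) (by linarith)]; nlinarith
          · rw [div_lt_div_iff₀ (by linarith) (by linarith)]; nlinarith
        rw [(key p I hp n).1 k hk _ hx, if_pos htyp]
        field_simp
        ring
  · rw [if_neg htyp]
    have hx : ((k:ℝ)+1)/((p:ℝ)^n + 1) ∈ Set.Ioo ((k:ℝ)/(p:ℝ)^n) (((k:ℝ)+1)/(p:ℝ)^n) := by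
      constructor
      · rw [div_lt_div_iff₀ (by linarith) (by linarith)]; nlinarith
      · rw [div_lt_div_iff₀ (by linarith) (by linarith)]; nlinarith
    rw [(key p I hp n).1 k hk _ hx, if_neg htyp]
    field_simp
    ring

set_option maxHeartbeats 800000 in
lemma fixed_exists (p : ℕ) (I : Finset ℕ) (hp : 2 ≤ p) {n : ℕ} (hn : 1 ≤ n)
    {y : ℝ} (hy : y ∈ Set.Icc (0:ℝ) 1) (hfix : (gpI p I)^[n] y = y) :
    ∃ k < p ^ n, xfun p I n k = y := by
  have hPR : (2:ℝ) ≤ (p:ℝ)^n := pow_twoR p hp hn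
  have hne1 : (p:ℝ)^n - 1 ≠ 0 := by linarith
  have hP1 : 1 ≤ p ^ n := Nat.one_le_pow _ _ (by omega)
  obtain ⟨hy0, hy1⟩ := hy
  by_cases hz : y = 0
  · subst hz
    have h0 := (key p I hp n).2.1
    rw [hfix] at h0
    have htyp : typ p I n 0 = true := by
      rcases h : typ p I n 0 with _ | _
      · rw [h] at h0; norm_num at h0
      · rfl
    refine ⟨0, by omega, ?_⟩
    rw [xfun, if_pos (by omega), if_pos htyp]
    simp
  · by_cases ho : y = 1
    · subst ho
      have h0 := (key p I hp n).2.2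
      rw [hfix] at h0
      have htyp : typ p I n (p ^ n - 1) = true := by
        rcases h : typ p I n (p ^ n - 1) with _ | _
        · rw [h] at h0; norm_num at h0
        · rfl
      refine ⟨p ^ n - 1, by omega, ?_⟩
      rw [xfun, if_pos (by omega), if_pos htyp]
      have hc : ((p ^ n - 1 : ℕ):ℝ) = (p:ℝ)^n - 1 := by
        push_cast [Nat.cast_sub hP1]
        ring
      rw [hc, div_self hne1]
    · have hy0' : 0 < y := lt_of_le_of_ne hy0 (Ne.symm hz)
      have hy1' : y < 1 := lt_of_le_of_ne hy1 ho
      by_cases hgrid : ∃ m : ℕ, (m:ℝ) = (p:ℝ)^n * y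
      · exfalso
        obtain ⟨m, hm⟩ := hgrid
        have hmle : m ≤ p ^ n := by
          have : (m:ℝ) ≤ ((p ^ n : ℕ):ℝ) := by
            push_cast
            nlinarith
          exact_mod_cast this
        have hyeq : y = (m:ℝ)/(p:ℝ)^n := by
          rw [eq_div_iff (by positivity)]
          linarith [hm]
        have := grid p I hp n m hmle
        rw [← hyeq, hfix] at this
        rcases this with h | h
        · exact hz h
        · exact ho h
      · set k : ℕ := (⌊(p:ℝ)^n * y⌋).toNat with hkdef
        have hflnn : (0:ℤ) ≤ ⌊(p:ℝ)^n * y⌋ := Int.floor_nonneg.mpr (by positivity)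
        have hc : (k:ℝ) = ((⌊(p:ℝ)^n * y⌋ : ℤ) : ℝ) := by
          rw [hkdef]
          exact_mod_cast Int.toNat_of_nonneg hflnn
        have h1 : (k:ℝ) ≤ (p:ℝ)^n * y := by rw [hc]; exact Int.floor_le _
        have h2 : (p:ℝ)^n * y < (k:ℝ) + 1 := by rw [hc]; exact Int.lt_floor_add_one _
        have hne : (k:ℝ) ≠ (p:ℝ)^n * y := fun h => hgrid ⟨k, h⟩
        have h1' : (k:ℝ) < (p:ℝ)^n * y := lt_of_le_of_ne h1 hne
        have hkP : k < p ^ n := by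
          have : (k:ℝ) < ((p ^ n : ℕ):ℝ) := by push_cast; nlinarith
          exact_mod_cast this
        have hx : y ∈ Set.Ioo ((k:ℝ)/(p:ℝ)^n) (((k:ℝ)+1)/(p:ℝ)^n) := by
          constructor
          · rw [div_lt_iff₀ (by positivity)]; nlinarith
          · rw [lt_div_iff₀ (by positivity)]; nlinarith
        have hkey := (key p I hp n).1 k hkP y hx
        rw [hfix] at hkey
        refine ⟨k, hkP, ?_⟩
        rw [xfun, if_pos hkP]
        rcases htyp : typ p I n k with _ | _
        · rw [htyp] at hkey
          simp only [Bool.false_eq_true, if_false] at hkey ⊢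
          rw [div_eq_iff (by linarith)]
          linarith
        · rw [htyp] at hkey
          simp only [if_true] at hkey ⊢
          rw [div_eq_iff hne1]
          linarith


open scoped Classical in
/-- `g_{p,I}^n` has exactly `p^n` fixed points in `[0,1]`, and listing them in increasing
order as `x_0 < x_1 < ⋯ < x_{p^n−1}` one has `x_k = k/(p^n − 1)` if `k ∈ I_{p^n}` and
`x_k = (k+1)/(p^n + 1)` otherwise. -/
theorem fixedPoints_gpI_iterate (p n : ℕ) (hp : 2 ≤ p) (hn : 1 ≤ n)
    (I : Finset ℕ) (hI : ∀ i ∈ I, i < p) :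
    {y ∈ Set.Icc (0 : ℝ) 1 | (gpI p I)^[n] y = y}.ncard = p ^ n ∧
    ∃ x : ℕ → ℝ, StrictMonoOn x (Set.Iio (p ^ n)) ∧
      x '' Set.Iio (p ^ n) = {y ∈ Set.Icc (0 : ℝ) 1 | (gpI p I)^[n] y = y} ∧
      ∀ k < p ^ n, x k = if k ∈ ISet p I n then (k : ℝ) / ((p : ℝ) ^ n - 1)
        else ((k : ℝ) + 1) / ((p : ℝ) ^ n + 1) := by
  have hmono := xfun_strictMono p I hp hn
  have himg : xfun p I n '' Set.Iio (p ^ n) = {y ∈ Set.Icc (0 : ℝ) 1 | (gpI p I)^[n] y = y} := by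
    ext y
    constructor
    · rintro ⟨k, hk, rfl⟩
      exact ⟨xfun_mem_Icc p I hp hn hk, xfun_fixed p I hp hn hk⟩
    · rintro ⟨hy, hfix⟩
      obtain ⟨k, hk, hke⟩ := fixed_exists p I hp hn hy hfix
      exact ⟨k, hk, hke⟩
  constructor
  · rw [← himg, Set.ncard_image_of_injOn (hmono.injective.injOn)]
    rw [← Finset.coe_Iio, Set.ncard_coe_finset, Nat.card_Iio]
  · refine ⟨xfun p I n, hmono.strictMonoOn _, himg, ?_⟩
    intro k hk
    rw [xfun, if_pos hk]
    by_cases htyp : typ p I n k = true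
    · rw [if_pos htyp, if_pos ((ISet_iff p I hp n hk).mpr htyp)]
    · rw [if_neg (by simp only [Bool.not_eq_true] at htyp; rw [htyp]; simp),
        if_neg (fun hmem => htyp ((ISet_iff p I hp n hk).mp hmem))]
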